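/- Self-similar implies polished tails: if there exist constants 0 < c ≤ C, β > 0 and N₁ such that c·N^{-2β} ≤ ∑_{j≥N} θ_j² ≤ C·N^{-2β} for all N ≥ N₁, then θ has polished tails for suitable constants (N₀, L₀, ρ) with ρ chosen so that C·ρ^{-2β} < c. -/

import Mathlib

/-- Tail sum `∑_{j ≥ N} θ_j²`. -/
noncomputable def tailSum (θ : ℕ → ℝ) (N : ℕ) : ℝ :=
  ∑' j : ℕ, if N ≤ j then θ j ^ 2 else 0

/-- Block sum `∑_{j = N}^{ρN} θ_j²`. -/
noncomputable def blockSum (θ : ℕ → ℝ) (N ρ : ℕ) : ℝ :=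
  ∑ j ∈ Finset.Icc N (ρ * N), θ j ^ 2

/-- Polished tail condition with constants `N₀, L₀, ρ`. -/
def PolishedTail (θ : ℕ → ℝ) (N₀ : ℕ) (L₀ : ℝ) (ρ : ℕ) : Prop :=
  ∀ N : ℕ, N₀ < N → tailSum θ N ≤ L₀ * blockSum θ N ρ

lemma tail_summable (θ : ℕ → ℝ) (hθ : Summable fun j => θ j ^ 2) (N : ℕ) :
    Summable fun j : ℕ => if N ≤ j then θ j ^ 2 else 0 := by
  have := hθ.indicator {j : ℕ | N ≤ j}
  convert this using 2 with j
  · rfl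
  · simp [Set.indicator_apply]

lemma tail_nonneg (θ : ℕ → ℝ) (N : ℕ) : 0 ≤ tailSum θ N := by
  apply tsum_nonneg
  intro j
  split <;> positivity

lemma tail_split (θ : ℕ → ℝ) (hθ : Summable fun j => θ j ^ 2) (N M : ℕ) (h : N ≤ M + 1) :
    tailSum θ N = (∑ j ∈ Finset.Icc N M, θ j ^ 2) + tailSum θ (M + 1) := by
  have h1 : Summable fun j : ℕ => if j ∈ Finset.Icc N M then θ j ^ 2 else 0 :=
    summable_of_finite_support (by
      apply Set.Finite.subset (Finset.Icc N M).finite_toSet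
      intro j hj
      rw [Function.mem_support] at hj
      by_contra hc
      rw [if_neg (by simpa using hc)] at hj
      exact hj rfl)
  have h2 := tail_summable θ hθ (M + 1)
  have key : ∀ j : ℕ, (if N ≤ j then θ j ^ 2 else 0) =
      (if j ∈ Finset.Icc N M then θ j ^ 2 else 0) + (if M + 1 ≤ j then θ j ^ 2 else 0) := by
    intro j
    by_cases ha : M + 1 ≤ j
    · rw [if_pos (le_trans h ha), if_neg (by simp [Finset.mem_Icc]; omega), if_pos ha]; ring
    · by_cases hb : N ≤ j
      · simp [Finset.mem_Icc, hb, ha, (by omega : j ≤ M)]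
      · simp [Finset.mem_Icc, hb, ha]
  unfold tailSum
  rw [tsum_congr key, Summable.tsum_add h1 h2]
  congr 1
  rw [tsum_eq_sum (s := Finset.Icc N M) (fun j hj => if_neg hj)]
  exact Finset.sum_congr rfl (fun j hj => if_pos hj)

theorem stmt_17 (θ : ℕ → ℝ) (hθ : Summable fun j => θ j ^ 2)
    (c C β : ℝ) (hc : 0 < c) (hcC : c ≤ C) (hβ : 0 < β)
    (N₁ : ℕ) (hN₁ : 1 ≤ N₁)
    (hself : ∀ N : ℕ, N₁ ≤ N →
      c * (N : ℝ) ^ (-(2 * β)) ≤ tailSum θ N ∧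
      tailSum θ N ≤ C * (N : ℝ) ^ (-(2 * β))) :
    ∃ (N₀ ρ : ℕ) (L₀ : ℝ), 1 ≤ L₀ ∧ 2 ≤ ρ ∧
      C * (ρ : ℝ) ^ (-(2 * β)) < c ∧ PolishedTail θ N₀ L₀ ρ := by
  have hC : 0 < C := lt_of_lt_of_le hc hcC
  have h0 : Filter.Tendsto (fun n : ℕ => C * (n : ℝ) ^ (-(2 * β))) Filter.atTop (nhds 0) := by
    have h1 : Filter.Tendsto (fun n : ℕ => (n : ℝ) ^ (-(2 * β))) Filter.atTop (nhds 0) :=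
      (tendsto_rpow_neg_atTop (by positivity : 0 < 2 * β)).comp
        (tendsto_natCast_atTop_atTop (R := ℝ))
    simpa using h1.const_mul C
  obtain ⟨ρ, hK, hρ2⟩ :=
    ((h0.eventually (gt_mem_nhds hc)).and (Filter.eventually_ge_atTop 2)).exists
  set K : ℝ := C * (ρ : ℝ) ^ (-(2 * β)) with hKdef
  have hKnn : 0 ≤ K := by positivity
  have ht : 0 < 1 - K / c := by
    have : K / c < 1 := (div_lt_one hc).mpr hK
    linarith
  have hεnn : 0 ≤ K / c := div_nonneg hKnn hc.le
  refine ⟨N₁, ρ, (1 - K / c)⁻¹, ?_, hρ2, hK, ?_⟩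
  · have h1 : 1 - K / c ≤ 1 := by linarith
    simpa using inv_anti₀ ht h1
  intro N hN
  have hN1 : N₁ ≤ N := hN.le
  have hNpos : 1 ≤ N := le_trans hN₁ hN1
  have hMN : N ≤ ρ * N + 1 := by nlinarith
  have hsplit := tail_split θ hθ N (ρ * N) hMN
  have hMge : N₁ ≤ ρ * N + 1 := by nlinarith
  -- bound the far tail
  have hfar : tailSum θ (ρ * N + 1) ≤ K * (N : ℝ) ^ (-(2 * β)) := by
    have h1 := (hself (ρ * N + 1) hMge).2
    have h2 : ((ρ * N + 1 : ℕ) : ℝ) ^ (-(2 * β)) ≤ ((ρ * N : ℕ) : ℝ) ^ (-(2 * β)) := by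
      have hpos : (0:ℝ) < ((ρ * N : ℕ) : ℝ) := by
        exact_mod_cast Nat.pos_of_ne_zero (by positivity)
      rw [Real.rpow_neg (by positivity), Real.rpow_neg (by positivity)]
      apply inv_anti₀ (Real.rpow_pos_of_pos hpos _)
      exact Real.rpow_le_rpow hpos.le (by push_cast; linarith) (by positivity)
    have h3 : ((ρ * N : ℕ) : ℝ) ^ (-(2 * β)) = (ρ : ℝ) ^ (-(2 * β)) * (N : ℝ) ^ (-(2 * β)) := by
      push_cast
      rw [Real.mul_rpow (by positivity) (by positivity)]
    calc tailSum θ (ρ * N + 1) ≤ C * ((ρ * N + 1 : ℕ) : ℝ) ^ (-(2 * β)) := h1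
      _ ≤ C * ((ρ * N : ℕ) : ℝ) ^ (-(2 * β)) := by nlinarith
      _ = K * (N : ℝ) ^ (-(2 * β)) := by rw [h3, hKdef]; ring
  have hlow := (hself N hN1).1
  have hfar2 : tailSum θ (ρ * N + 1) ≤ (K / c) * tailSum θ N := by
    calc tailSum θ (ρ * N + 1) ≤ K * (N : ℝ) ^ (-(2 * β)) := hfar
      _ = (K / c) * (c * (N : ℝ) ^ (-(2 * β))) := by field_simp
      _ ≤ (K / c) * tailSum θ N := mul_le_mul_of_nonneg_left hlow hεnn
  have hblock : (1 - K / c) * tailSum θ N ≤ blockSum θ N ρ := by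
    have : blockSum θ N ρ = tailSum θ N - tailSum θ (ρ * N + 1) := by
      rw [blockSum]; linarith [hsplit]
    rw [this]; nlinarith [tail_nonneg θ N]
  calc tailSum θ N = (1 - K / c)⁻¹ * ((1 - K / c) * tailSum θ N) :=
        (inv_mul_cancel_left₀ ht.ne' _).symm
    _ ≤ (1 - K / c)⁻¹ * blockSum θ N ρ :=
        mul_le_mul_of_nonneg_left hblock (inv_nonneg.mpr ht.le)
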